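/- For 0 < α < 1, ∑ over all compositions (n₁,…,n_k) of n of (n!/[α]_n) α^k ∏_{j=1}^k [1-α]_{n_j-1}/n_j! equals 1. -/

import Mathlib

/-- The rising factorial `[x]_k = x(x+1)⋯(x+k-1)`. -/
noncomputable def risingFac (x : ℝ) (k : ℕ) : ℝ := ∏ i ∈ Finset.range k, (x + i)

section scalar

lemma desc_smeval_neg (x : ℝ) : ∀ n, ((descPochhammer ℤ n).smeval (-x)) = (-1)^n * risingFac x n
  | 0 => by simp [risingFac]
  | (n+1) => by
    rw [descPochhammer_succ_right, Polynomial.smeval_mul, desc_smeval_neg x n,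
      Polynomial.smeval_sub, Polynomial.smeval_X, Polynomial.smeval_natCast]
    rw [show risingFac x (n+1) = risingFac x n * (x + n) from Finset.prod_range_succ _ n]
    ring

lemma risingFac_eq_choose (x : ℝ) (n : ℕ) :
    risingFac x n = (-1)^n * ((n.factorial : ℝ) * Ring.choose (-x) n) := by
  have h := Ring.descPochhammer_eq_factorial_smul_choose (-x) n
  rw [desc_smeval_neg, nsmul_eq_mul] at h
  have h2 : ((-1:ℝ))^n * ((-1)^n * risingFac x n)
      = (-1)^n * (↑n.factorial * Ring.choose (-x) n) := by rw [h]
  rwa [← mul_assoc, ← pow_add, Even.neg_one_pow ⟨n, by ring⟩, one_mul] at h2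

lemma risingFac_succ_left (x : ℝ) (m : ℕ) : risingFac x (m+1) = x * risingFac (x+1) m := by
  rw [risingFac, Finset.prod_range_succ']
  simp only [Nat.cast_zero, add_zero, mul_comm, risingFac]
  congr 1
  exact Finset.prod_congr rfl fun i _ => by push_cast; ring

lemma R_eq (α : ℝ) (k : ℕ) :
    risingFac α k / (k.factorial : ℝ) = (-1)^k * Ring.choose (-α) k := by
  rw [risingFac_eq_choose]
  field_simp

lemma W_eq (α : ℝ) (j : ℕ) :
    α * risingFac (1-α) ((j+1) - 1) / ((j+1).factorial : ℝ)
      = -((-1)^(j+1) * Ring.choose α (j+1)) := by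
  have h : risingFac (-α) (j+1) = -α * risingFac (1-α) j := by
    rw [risingFac_succ_left]; ring_nf
  have h2 := risingFac_eq_choose (-α) (j+1)
  rw [h, neg_neg] at h2
  have hf : (((j+1).factorial : ℝ)) ≠ 0 := Nat.cast_ne_zero.mpr (Nat.factorial_ne_zero _)
  have : α * risingFac (1-α) j = -((-1)^(j+1) * (((j+1).factorial : ℝ) * Ring.choose α (j+1))) := by
    linarith [h2]
  simp only [Nat.add_sub_cancel]
  rw [div_eq_iff hf, this]
  ring

lemma scalar_rec (α : ℝ) (n : ℕ) (hn : 1 ≤ n) :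
    ∑ m ∈ Finset.Icc 1 n,
        (α * risingFac (1-α) (m - 1) / (m.factorial : ℝ))
          * (risingFac α (n-m) / ((n-m).factorial : ℝ))
      = risingFac α n / (n.factorial : ℝ) := by
  have hV := Ring.add_choose_eq (r := α) (s := -α) n (Commute.all _ _)
  rw [add_neg_cancel] at hV
  rw [Finset.Nat.sum_antidiagonal_eq_sum_range_succ_mk] at hV
  have h0 : Ring.choose (0:ℝ) n = 0 := by
    rw [show (0:ℝ) = ((0:ℕ):ℝ) by norm_num, Ring.choose_natCast, Nat.choose_eq_zero_of_lt hn]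
  rw [h0] at hV
  have hsplit : ∑ k ∈ Finset.range (n+1), Ring.choose α k * Ring.choose (-α) (n-k)
      = Ring.choose α 0 * Ring.choose (-α) n
        + ∑ k ∈ Finset.Icc 1 n, Ring.choose α k * Ring.choose (-α) (n-k) := by
    rw [Finset.range_eq_Ico, Finset.sum_eq_sum_Ico_succ_bot (by omega)]
    simp [Finset.Ico_add_one_right_eq_Icc]
  rw [hsplit, Ring.choose_zero_right, one_mul] at hV
  have hIcc : ∑ k ∈ Finset.Icc 1 n, Ring.choose α k * Ring.choose (-α) (n-k)
      = -Ring.choose (-α) n := by linarith [hV]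
  rw [R_eq]
  calc ∑ m ∈ Finset.Icc 1 n,
        (α * risingFac (1-α) (m - 1) / (m.factorial : ℝ))
          * (risingFac α (n-m) / ((n-m).factorial : ℝ))
      = ∑ m ∈ Finset.Icc 1 n, -((-1:ℝ)^n * (Ring.choose α m * Ring.choose (-α) (n-m))) := by
        apply Finset.sum_congr rfl
        intro m hm
        simp only [Finset.mem_Icc] at hm
        obtain ⟨j, rfl⟩ : ∃ j, m = j + 1 := ⟨m - 1, by omega⟩
        rw [W_eq, R_eq]
        have : (-1:ℝ)^(j+1) * (-1)^(n-(j+1)) = (-1)^n := by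
          rw [← pow_add]; congr 1; omega
        rw [show -((-1:ℝ)^(j+1) * Ring.choose α (j+1))
              * ((-1)^(n-(j+1)) * Ring.choose (-α) (n-(j+1)))
            = -(((-1:ℝ)^(j+1) * (-1)^(n-(j+1)))
              * (Ring.choose α (j+1) * Ring.choose (-α) (n-(j+1)))) by ring, this]
    _ = -((-1:ℝ)^n * ∑ k ∈ Finset.Icc 1 n, Ring.choose α k * Ring.choose (-α) (n-k)) := by
        rw [Finset.mul_sum, ← Finset.sum_neg_distrib]
    _ = (-1)^n * Ring.choose (-α) n := by rw [hIcc]; ring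

end scalar

section comp

lemma headI_mem' {l : List ℕ} (h : l ≠ []) : l.headI ∈ l := by
  cases l with
  | nil => exact absurd rfl h
  | cons a t => exact List.mem_cons_self

lemma cons_headI_tail' {l : List ℕ} (h : l ≠ []) : l.headI :: l.tail = l := by
  cases l with
  | nil => exact absurd rfl h
  | cons a t => rfl

lemma comp_zero_blocks (c : Composition 0) : c.blocks = [] := by
  have hs := c.blocks_sum
  cases h : c.blocks with
  | nil => rfl
  | cons a l =>
    exfalso
    have := c.blocks_pos (by rw [h]; exact List.mem_cons_self)
    rw [h] at hs
    simp at hs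
    omega

/-- The cons equivalence for compositions. -/
def compConsEquiv (n : ℕ) :
    Composition (n+1) ≃ Σ m : (Finset.Icc 1 (n+1) : Finset ℕ), Composition (n+1-(m:ℕ)) where
  toFun c :=
    have hne : c.blocks ≠ [] := by
      intro h
      have := c.blocks_sum
      rw [h] at this
      simp at this
    have hmem : c.blocks.headI ∈ c.blocks := headI_mem' hne
    have hsum : c.blocks.headI + c.blocks.tail.sum = n+1 := by
      rw [List.headI_add_tail_sum, c.blocks_sum]
    ⟨⟨c.blocks.headI, by
        simp only [Finset.mem_Icc]
        exact ⟨c.blocks_pos hmem, by omega⟩⟩,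
      ⟨c.blocks.tail, fun hi => c.blocks_pos (List.mem_of_mem_tail hi),
        show c.blocks.tail.sum = n + 1 - c.blocks.headI by omega⟩⟩
  invFun x :=
    ⟨(x.1 : ℕ) :: x.2.blocks,
      by
        intro i hi
        rcases List.mem_cons.mp hi with h | h
        · subst h
          have := x.1.2
          simp only [Finset.mem_Icc] at this
          omega
        · exact x.2.blocks_pos h,
      by
        have := x.2.blocks_sum
        have h1 := x.1.2
        simp only [Finset.mem_Icc] at h1
        simp [List.sum_cons, this]
        omega⟩
  left_inv c := by
    have hne : c.blocks ≠ [] := by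
      intro h
      have := c.blocks_sum
      rw [h] at this
      simp at this
    ext1
    exact cons_headI_tail' hne
  right_inv x := by
    rcases x with ⟨⟨m, hm⟩, d⟩
    rfl

/-- The composition sum. -/
noncomputable def compF (α : ℝ) (n : ℕ) : ℝ :=
  ∑ c : Composition n,
    α ^ c.length * (c.blocks.map (fun m => risingFac (1 - α) (m - 1) / (m.factorial : ℝ))).prod

lemma compF_zero (α : ℝ) : compF α 0 = 1 := by
  haveI : Subsingleton (Composition 0) :=
    ⟨fun a b => by ext1; rw [comp_zero_blocks a, comp_zero_blocks b]⟩
  rw [compF, Fintype.sum_subsingleton _ (Composition.ones 0)]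
  simp [Composition.ones_blocks, Composition.length]

lemma compF_rec (α : ℝ) (n : ℕ) :
    compF α (n+1) = ∑ m ∈ Finset.Icc 1 (n+1),
      (α * (risingFac (1 - α) (m - 1) / (m.factorial : ℝ))) * compF α (n+1-m) := by
  classical
  rw [compF, ← Equiv.sum_comp (compConsEquiv n).symm]
  rw [← Finset.univ_sigma_univ, Finset.sum_sigma]
  rw [← Finset.sum_coe_sort (Finset.Icc 1 (n+1))]
  apply Finset.sum_congr rfl
  intro m _
  have : ∀ d : Composition (n+1-(m:ℕ)),
      ((compConsEquiv n).symm ⟨m, d⟩).blocks = (m:ℕ) :: d.blocks := fun d => rfl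
  rw [compF, Finset.mul_sum]
  apply Finset.sum_congr rfl
  intro d _
  rw [this d]
  simp only [Composition.length, this d, List.length_cons, List.map_cons, List.prod_cons]
  rw [pow_succ]
  ring

lemma compF_eq (α : ℝ) : ∀ n, compF α n = risingFac α n / (n.factorial : ℝ) := by
  intro n
  induction n using Nat.strong_induction_on with
  | _ n ih =>
    match n with
    | 0 => simp [compF_zero, risingFac]
    | (k+1) =>
      rw [compF_rec, ← scalar_rec α (k+1) (by omega)]
      apply Finset.sum_congr rfl
      intro m hm
      simp only [Finset.mem_Icc] at hm
      rw [ih (k+1-m) (by omega)]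
      ring

end comp

/-- The `(α,α)` composition probability function sums to one over all compositions of `n`. -/
theorem stmt14 (α : ℝ) (hα0 : 0 < α) (hα1 : α < 1) (n : ℕ) (hn : 1 ≤ n) :
    ∑ c : Composition n,
      (n.factorial : ℝ) / risingFac α n * α ^ c.length *
        (c.blocks.map (fun m => risingFac (1 - α) (m - 1) / (m.factorial : ℝ))).prod = 1 := by
  have hpos : 0 < risingFac α n := by
    apply Finset.prod_pos
    intro i _
    positivity
  have h : ∑ c : Composition n,
      (n.factorial : ℝ) / risingFac α n * α ^ c.length *
        (c.blocks.map (fun m => risingFac (1 - α) (m - 1) / (m.factorial : ℝ))).prod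
      = (n.factorial : ℝ) / risingFac α n * compF α n := by
    rw [compF, Finset.mul_sum]
    apply Finset.sum_congr rfl
    intro c _
    ring
  rw [h, compF_eq]
  have hf : ((n.factorial : ℝ)) ≠ 0 := Nat.cast_ne_zero.mpr (Nat.factorial_ne_zero _)
  field_simp
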